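/- For every x ∈ ℝ there exists c₀ > 0 such that the map c ↦ V^c(x) is differentiable on (0, c₀), and lim_{c → 0⁺} √c · (d/dc)V^c(x) = −σ√α/(√6 ρ); in particular (d/dc)V^c(x) → −∞ as c → 0⁺. -/

import Mathlib

/-- `h_A(y) = A θ e^{θ y} − A θ e^{−θ y} − 2 k₂ y`. -/
noncomputable def hFun (θ k₂ A y : ℝ) : ℝ :=
  A * θ * Real.exp (θ * y) - A * θ * Real.exp (-(θ * y)) - 2 * k₂ * y

/-- `g(A) = −A e^{θ ȳ(A)} − A e^{−θ ȳ(A)} + k₂ ȳ(A)² + 2A`. -/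
noncomputable def gFun (θ k₂ : ℝ) (ybar : ℝ → ℝ) (A : ℝ) : ℝ :=
  -A * Real.exp (θ * ybar A) - A * Real.exp (-(θ * ybar A)) + k₂ * (ybar A) ^ 2 + 2 * A

/-- `φ_A(x) = A e^{θ(x−x_v)} + A e^{−θ(x−x_v)} − k₂ (x−x_v)² + k₀`. -/
noncomputable def phiFun (θ k₂ k₀ xv A x : ℝ) : ℝ :=
  A * Real.exp (θ * (x - xv)) + A * Real.exp (-(θ * (x - xv))) - k₂ * (x - xv) ^ 2 + k₀

/-- `V^c(x) = φ_{A(c)}(x)` on `(x_v − ȳ(c), x_v + ȳ(c))`, and `φ_{A(c)}(x_v) − c` otherwise. -/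
noncomputable def VFun (θ k₂ k₀ xv : ℝ) (Ac ybc : ℝ → ℝ) (c x : ℝ) : ℝ :=
  if xv - ybc c < x ∧ x < xv + ybc c then phiFun θ k₂ k₀ xv (Ac c) x
  else phiFun θ k₂ k₀ xv (Ac c) xv - c

open Real Filter Set Topology

lemma aux_sinh_lt {t : ℝ} (ht : 0 < t) : Real.sinh t < t * Real.cosh t := by
  have key : StrictMonoOn (fun t : ℝ => t * Real.cosh t - Real.sinh t) (Set.Ici 0) := by
    apply strictMonoOn_of_deriv_pos (convex_Ici 0)
    · exact ((continuous_id.mul Real.continuous_cosh).sub Real.continuous_sinh).continuousOn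
    · intro x hx
      rw [interior_Ici, Set.mem_Ioi] at hx
      have h1 : HasDerivAt (fun t : ℝ => t * Real.cosh t - Real.sinh t) (x * Real.sinh x) x := by
        have := ((hasDerivAt_id x).mul (Real.hasDerivAt_cosh x)).sub (Real.hasDerivAt_sinh x)
        refine this.congr_deriv ?_
        simp only [id_eq]
        ring
      rw [h1.deriv]
      exact mul_pos hx (by simpa using hx)
  have h0 : (0:ℝ) ∈ Set.Ici (0:ℝ) := Set.self_mem_Ici
  have := key h0 (Set.mem_Ici.2 ht.le) ht
  simp only [Real.cosh_zero, Real.sinh_zero, mul_one, zero_mul, sub_zero] at this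
  linarith

lemma aux_tanh_lt {x : ℝ} (hx : 0 < x) : Real.tanh x < x := by
  rw [Real.tanh_eq_sinh_div_cosh, div_lt_iff₀ (Real.cosh_pos x)]
  exact aux_sinh_lt hx

lemma aux_hasDerivAt_tanh (x : ℝ) : HasDerivAt Real.tanh (1 - Real.tanh x ^ 2) x := by
  have h := (Real.hasDerivAt_sinh x).div (Real.hasDerivAt_cosh x) (Real.cosh_pos x).ne'
  have heq : (Real.cosh x * Real.cosh x - Real.sinh x * Real.sinh x) / Real.cosh x ^ 2
      = 1 - Real.tanh x ^ 2 := by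
    rw [Real.tanh_eq_sinh_div_cosh]
    have hc := (Real.cosh_pos x).ne'
    field_simp
  rw [heq] at h
  exact h.congr_of_eventuallyEq
    (Filter.Eventually.of_forall (fun y => Real.tanh_eq_sinh_div_cosh y))

/-- half-angle: `tanh (t/2) = (cosh t - 1)/sinh t` for `t ≠ 0`. -/
lemma aux_tanh_half {t : ℝ} (ht : t ≠ 0) :
    Real.tanh (t / 2) = (Real.cosh t - 1) / Real.sinh t := by
  have h2 : Real.cosh t = Real.cosh (t/2) ^ 2 + Real.sinh (t/2) ^ 2 := by
    have := Real.cosh_two_mul (t/2); rw [show 2*(t/2) = t by ring] at this; exact this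
  have h3 : Real.sinh t = 2 * Real.sinh (t/2) * Real.cosh (t/2) := by
    have := Real.sinh_two_mul (t/2); rw [show 2*(t/2) = t by ring] at this; exact this
  have hs : Real.sinh t ≠ 0 := Real.sinh_ne_zero.2 ht
  have hc : Real.cosh (t/2) ≠ 0 := (Real.cosh_pos _).ne'
  rw [Real.tanh_eq_sinh_div_cosh, div_eq_div_iff hc hs, h2, h3]
  linear_combination (-(Real.cosh (t/2))) * Real.cosh_sq_sub_sinh_sq (t/2)

/-- `sinh t / t → 1` as `t → 0⁺`. -/
lemma aux_sinh_div : Tendsto (fun t : ℝ => Real.sinh t / t) (𝓝[>] 0) (𝓝 1) := by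
  have h := (hasDerivAt_iff_tendsto_slope).1 (Real.hasDerivAt_sinh 0)
  rw [Real.cosh_zero] at h
  have h2 : Tendsto (slope Real.sinh 0) (𝓝[>] (0:ℝ)) (𝓝 1) :=
    h.mono_left (nhdsWithin_mono 0 (fun x hx => ne_of_gt hx))
  refine h2.congr (fun x => ?_)
  simp [slope_def_field, div_eq_div_iff]

noncomputable def Kf (t : ℝ) : ℝ := (Real.sinh t - t * Real.cosh t) / Real.sinh t ^ 2
noncomputable def Gf (t : ℝ) : ℝ := t ^ 2 - 2 * t * Real.tanh (t / 2)
noncomputable def Gd (t : ℝ) : ℝ := t - 2 * Real.tanh (t / 2) + t * Real.tanh (t / 2) ^ 2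

lemma hasDerivAt_Gf (t : ℝ) : HasDerivAt Gf (Gd t) t := by
  have h1 : HasDerivAt (fun t : ℝ => Real.tanh (t / 2)) ((1 - Real.tanh (t/2) ^ 2) * (1/2)) t :=
    by have := (aux_hasDerivAt_tanh (t/2)).comp t ((hasDerivAt_id t).div_const 2); exact this
  have h2 : HasDerivAt (fun t : ℝ => t ^ 2 - 2 * t * Real.tanh (t / 2))
      (2 * t - (2 * Real.tanh (t/2) + 2 * t * ((1 - Real.tanh (t/2) ^ 2) * (1/2)))) t := by
    have := (hasDerivAt_pow 2 t).sub (((hasDerivAt_id t).const_mul 2).mul h1)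
    refine this.congr_deriv ?_
    simp only [id_eq, pow_one]
    ring
  have : Gf = fun t : ℝ => t ^ 2 - 2 * t * Real.tanh (t / 2) := rfl
  rw [this]
  convert h2 using 1
  unfold Gd
  ring

lemma Gd_pos {t : ℝ} (ht : 0 < t) : 0 < Gd t := by
  have h1 : Real.tanh (t/2) < t/2 := aux_tanh_lt (by linarith)
  have h2 : 0 ≤ t * Real.tanh (t/2) ^ 2 := mul_nonneg ht.le (sq_nonneg _)
  unfold Gd
  nlinarith

lemma Gf_pos {t : ℝ} (ht : 0 < t) : 0 < Gf t := by
  have h1 : Real.tanh (t/2) < t/2 := aux_tanh_lt (by linarith)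
  unfold Gf
  nlinarith

/-- `(sinh t - t cosh t)/t³ → -1/3` as `t → 0⁺`. -/
lemma aux_M_limit :
    Tendsto (fun t : ℝ => (Real.sinh t - t * Real.cosh t) / t ^ 3) (𝓝[>] 0) (𝓝 (-(1/3))) := by
  have hff' : ∀ x : ℝ, HasDerivAt (fun t : ℝ => Real.sinh t - t * Real.cosh t)
      (-(x * Real.sinh x)) x := by
    intro x
    have := (Real.hasDerivAt_sinh x).sub ((hasDerivAt_id x).mul (Real.hasDerivAt_cosh x))
    refine this.congr_deriv ?_
    simp only [id_eq]
    ring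
  have hgg' : ∀ x : ℝ, HasDerivAt (fun t : ℝ => t ^ 3) (3 * x ^ 2) x := by
    intro x
    simpa using hasDerivAt_pow 3 x
  apply HasDerivAt.lhopital_zero_nhdsGT
    (f' := fun x => -(x * Real.sinh x)) (g' := fun x => 3 * x ^ 2)
  · exact Filter.Eventually.of_forall (fun x => hff' x)
  · exact Filter.Eventually.of_forall (fun x => hgg' x)
  · filter_upwards [self_mem_nhdsWithin] with x hx
    have : (0:ℝ) < x := hx
    positivity
  · have : Tendsto (fun t : ℝ => Real.sinh t - t * Real.cosh t) (𝓝 0) (𝓝 0) := by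
      have := (Real.continuous_sinh.sub (continuous_id.mul Real.continuous_cosh)).tendsto 0
      exact (by simpa using this : Tendsto (Real.sinh - id * Real.cosh) (𝓝 0) (𝓝 0))
    exact this.mono_left nhdsWithin_le_nhds
  · have : Tendsto (fun t : ℝ => t ^ 3) (𝓝 (0:ℝ)) (𝓝 0) := by
      have := (continuous_pow 3).tendsto (0:ℝ)
      simpa using this
    exact this.mono_left nhdsWithin_le_nhds
  · have key : Tendsto (fun x : ℝ => -(Real.sinh x / x) / 3) (𝓝[>] 0) (𝓝 (-(1/3))) := by
      have := (aux_sinh_div.neg).div_const 3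
      convert this using 2
      norm_num
    refine key.congr' ?_
    filter_upwards [self_mem_nhdsWithin] with x hx
    have hx0 : (x:ℝ) ≠ 0 := ne_of_gt hx
    field_simp

lemma aux_half_tendsto : Tendsto (fun t : ℝ => t / 2) (𝓝[>] (0:ℝ)) (𝓝[>] 0) := by
  rw [tendsto_nhdsWithin_iff]
  constructor
  · have : Tendsto (fun t : ℝ => t / 2) (𝓝 0) (𝓝 (0/2)) := (tendsto_id.div_const 2)
    simpa using this.mono_left nhdsWithin_le_nhds
  · filter_upwards [self_mem_nhdsWithin] with x hx
    exact div_pos (show (0:ℝ) < x from hx) (by norm_num)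

lemma aux_cosh_tendsto : Tendsto (fun t : ℝ => Real.cosh (t/2)) (𝓝[>] (0:ℝ)) (𝓝 1) := by
  have : Tendsto (fun t : ℝ => Real.cosh (t/2)) (𝓝 0) (𝓝 (Real.cosh (0/2))) :=
    (Real.continuous_cosh.comp (continuous_id.div_const 2)).tendsto 0
  simp only [zero_div, Real.cosh_zero] at this
  exact this.mono_left nhdsWithin_le_nhds

/-- `Gf t / t⁴ → 1/12`. -/
lemma aux_Gf_limit : Tendsto (fun t : ℝ => Gf t / t ^ 4) (𝓝[>] 0) (𝓝 (1/12)) := by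
  have hM : Tendsto (fun t : ℝ => (Real.sinh (t/2) - (t/2) * Real.cosh (t/2)) / (t/2) ^ 3)
      (𝓝[>] 0) (𝓝 (-(1/3))) := aux_M_limit.comp aux_half_tendsto
  have key : Tendsto (fun t : ℝ =>
      (-(1/4)) * ((Real.sinh (t/2) - (t/2) * Real.cosh (t/2)) / (t/2) ^ 3) / Real.cosh (t/2))
      (𝓝[>] 0) (𝓝 ((-(1/4)) * (-(1/3)) / 1)) :=
    ((hM.const_mul (-(1/4))).div aux_cosh_tendsto (by norm_num))
  have : ((-(1/4)) * (-(1/3)) / 1 : ℝ) = 1/12 := by norm_num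
  rw [this] at key
  refine key.congr' ?_
  filter_upwards [self_mem_nhdsWithin] with t ht
  have ht0 : (t:ℝ) ≠ 0 := ne_of_gt ht
  have hc : Real.cosh (t/2) ≠ 0 := (Real.cosh_pos _).ne'
  unfold Gf
  rw [Real.tanh_eq_sinh_div_cosh]
  field_simp
  ring

/-- `Kf t / t → -1/3`. -/
lemma aux_Kf_limit : Tendsto (fun t : ℝ => Kf t / t) (𝓝[>] 0) (𝓝 (-(1/3))) := by
  have hsq : Tendsto (fun t : ℝ => ((Real.sinh t / t) ^ 2)⁻¹) (𝓝[>] 0) (𝓝 1) := by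
    have := ((aux_sinh_div.pow 2).inv₀ (by norm_num))
    simpa using this
  have key := aux_M_limit.mul hsq
  rw [show (-(1/3) * 1 : ℝ) = -(1/3) by norm_num] at key
  refine key.congr' ?_
  filter_upwards [self_mem_nhdsWithin] with t ht
  have ht0 : (t:ℝ) ≠ 0 := ne_of_gt ht
  have hs : Real.sinh t ≠ 0 := Real.sinh_ne_zero.2 ht0
  unfold Kf
  field_simp

/-- `Gd t / t³ → 1/3`. -/
lemma aux_Gd_limit : Tendsto (fun t : ℝ => Gd t / t ^ 3) (𝓝[>] 0) (𝓝 (1/3)) := by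
  have hc2 : Tendsto (fun t : ℝ => Real.cosh (t/2) ^ 2) (𝓝[>] (0:ℝ)) (𝓝 1) := by
    have := aux_cosh_tendsto.pow 2
    simpa using this
  have key : Tendsto (fun t : ℝ =>
      -((Real.sinh t - t * Real.cosh t) / t ^ 3) / Real.cosh (t/2) ^ 2)
      (𝓝[>] 0) (𝓝 (-(-(1/3)) / 1)) := (aux_M_limit.neg.div hc2 (by norm_num))
  rw [show (-(-(1/3)) / 1 : ℝ) = 1/3 by norm_num] at key
  refine key.congr' ?_
  filter_upwards [self_mem_nhdsWithin] with t ht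
  have ht0 : (t:ℝ) ≠ 0 := ne_of_gt ht
  have hc : Real.cosh (t/2) ≠ 0 := (Real.cosh_pos _).ne'
  have h2 : Real.cosh t = Real.cosh (t/2) ^ 2 + Real.sinh (t/2) ^ 2 := by
    have := Real.cosh_two_mul (t/2); rw [show 2*(t/2) = t by ring] at this; exact this
  have h3 : Real.sinh t = 2 * Real.sinh (t/2) * Real.cosh (t/2) := by
    have := Real.sinh_two_mul (t/2); rw [show 2*(t/2) = t by ring] at this; exact this
  unfold Gd
  rw [Real.tanh_eq_sinh_div_cosh, h2, h3]
  field_simp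
  ring

/-- `√(Gf t) * (2 Kf t / Gd t) → -1/√3` as `t → 0⁺`. -/
lemma aux_Psi_limit :
    Tendsto (fun t : ℝ => Real.sqrt (Gf t) * (2 * Kf t / Gd t)) (𝓝[>] 0)
      (𝓝 (-(Real.sqrt 3)⁻¹)) := by
  have hsqrt : Tendsto (fun t : ℝ => Real.sqrt (Gf t / t ^ 4)) (𝓝[>] 0) (𝓝 (Real.sqrt (1/12))) :=
    (Real.continuous_sqrt.tendsto _).comp aux_Gf_limit
  have hdiv : Tendsto (fun t : ℝ => 2 * (Kf t / t) / (Gd t / t ^ 3)) (𝓝[>] 0)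
      (𝓝 (2 * (-(1/3)) / (1/3))) :=
    ((aux_Kf_limit.const_mul 2).div aux_Gd_limit (by norm_num))
  have key := hsqrt.mul hdiv
  have hval : Real.sqrt (1/12) * (2 * (-(1/3)) / (1/3)) = -(Real.sqrt 3)⁻¹ := by
    rw [show (1/12 : ℝ) = 12⁻¹ by norm_num, Real.sqrt_inv,
      show (12:ℝ) = 2^2 * 3 by norm_num, Real.sqrt_mul (by positivity) 3,
      Real.sqrt_sq (by norm_num : (0:ℝ) ≤ 2)]
    have h3 : Real.sqrt 3 ≠ 0 := by positivity
    field_simp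
  rw [hval] at key
  refine key.congr' ?_
  filter_upwards [self_mem_nhdsWithin] with t ht
  have ht0 : (t:ℝ) ≠ 0 := ne_of_gt ht
  have hGd : Gd t ≠ 0 := (Gd_pos ht).ne'
  have hGf : 0 ≤ Gf t := (Gf_pos ht).le
  have h1 : Real.sqrt (Gf t / t ^ 4) = Real.sqrt (Gf t) / t ^ 2 := by
    rw [Real.sqrt_div hGf, show (t:ℝ)^4 = (t^2)^2 by ring, Real.sqrt_sq (by positivity)]
  rw [h1]
  have ht2 : (t:ℝ) ^ 2 ≠ 0 := pow_ne_zero 2 ht0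
  have ht3 : (t:ℝ) ^ 3 ≠ 0 := pow_ne_zero 3 ht0
  field_simp

lemma aux_key (θ k₂ c A y : ℝ) (hθ0 : 0 < θ) (hy0 : 0 < y)
    (hh : A * θ * Real.exp (θ * y) - A * θ * Real.exp (-(θ * y)) - 2 * k₂ * y = 0)
    (hg : -A * Real.exp (θ * y) - A * Real.exp (-(θ * y)) + k₂ * y ^ 2 + 2 * A = c) :
    k₂ / θ ^ 2 * Gf (θ * y) = c ∧ A = k₂ * y / (θ * Real.sinh (θ * y)) := by
  have hty : 0 < θ * y := mul_pos hθ0 hy0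
  have hsinh : 0 < Real.sinh (θ * y) := by rwa [Real.sinh_pos_iff]
  have hexp1 : Real.exp (θ * y) - Real.exp (-(θ * y)) = 2 * Real.sinh (θ * y) := by
    rw [Real.sinh_eq]; ring
  have hexp2 : Real.exp (θ * y) + Real.exp (-(θ * y)) = 2 * Real.cosh (θ * y) := by
    rw [Real.cosh_eq]; ring
  have h1 : A * θ * (2 * Real.sinh (θ * y)) = 2 * k₂ * y := by
    linear_combination hh - A * θ * hexp1
  have hA : A = k₂ * y / (θ * Real.sinh (θ * y)) := by
    rw [eq_div_iff (by positivity)]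
    linear_combination h1 / 2
  have h2 : k₂ * y ^ 2 - 2 * A * (Real.cosh (θ * y) - 1) = c := by
    linear_combination hg + A * hexp2
  refine ⟨?_, hA⟩
  have htanh := aux_tanh_half hty.ne'
  unfold Gf
  rw [htanh, ← h2]
  field_simp
  linear_combination (Real.cosh (θ * y) - 1) * h1


theorem stmt_16 (ρ σ Δ b θ k₂ k₀ α xv yv : ℝ)
    (hρ : 0 < ρ) (hσ : 0 < σ) (hΔ : 0 < Δ) (hb : 0 ≤ b)
    (hθ : θ = Real.sqrt (2 * ρ) / σ)
    (hα : α = (Δ + b) / Δ ^ 2)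
    (hxv : xv = Δ * (Δ + 2 * b) / (2 * (Δ + b)))
    (hyv : yv = Δ ^ 2 / (4 * (Δ + b)))
    (hk₂ : k₂ = α / ρ)
    (hk₀ : k₀ = yv / ρ - 2 * k₂ / θ ^ 2)
    (ybarA : ℝ → ℝ)
    (hybarA : ∀ A : ℝ, 0 < A → A < k₂ / θ ^ 2 →
      0 < ybarA A ∧ hFun θ k₂ A (ybarA A) = 0)
    (Ac : ℝ → ℝ)
    (hAc : ∀ c : ℝ, 0 < c →
      0 < Ac c ∧ Ac c < k₂ / θ ^ 2 ∧ gFun θ k₂ ybarA (Ac c) = c) :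
    ∀ x : ℝ, ∃ c₀ : ℝ, 0 < c₀ ∧
      (∀ c ∈ Set.Ioo (0 : ℝ) c₀,
        DifferentiableAt ℝ (fun c => VFun θ k₂ k₀ xv Ac (fun c => ybarA (Ac c)) c x) c) ∧
      Filter.Tendsto
        (fun c => Real.sqrt c *
          deriv (fun c => VFun θ k₂ k₀ xv Ac (fun c => ybarA (Ac c)) c x) c)
        (nhdsWithin 0 (Set.Ioi 0))
        (nhds (-(σ * Real.sqrt α) / (Real.sqrt 6 * ρ))) ∧
      Filter.Tendsto
        (fun c => deriv (fun c => VFun θ k₂ k₀ xv Ac (fun c => ybarA (Ac c)) c x) c)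
        (nhdsWithin 0 (Set.Ioi 0)) Filter.atBot := by
  intro x
  have hΔb : 0 < Δ + b := by linarith
  have hαpos : 0 < α := by rw [hα]; exact div_pos hΔb (by positivity)
  have hθ0 : 0 < θ := by
    rw [hθ]; exact div_pos (Real.sqrt_pos.2 (by linarith)) hσ
  have hk2 : 0 < k₂ := by rw [hk₂]; exact div_pos hαpos hρ
  set s : ℝ → ℝ := fun c => ybarA (Ac c) with hs_def
  set FF : ℝ → ℝ := fun y => k₂ / θ ^ 2 * Gf (θ * y) with hFF_def
  -- key equations for positive `c`
  have key1 : ∀ c : ℝ, 0 < c → 0 < s c ∧ FF (s c) = c ∧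
      Ac c = k₂ * s c / (θ * Real.sinh (θ * s c)) := by
    intro c hc
    obtain ⟨hA0, hA1, hg⟩ := hAc c hc
    obtain ⟨hy0, hh⟩ := hybarA _ hA0 hA1
    unfold hFun at hh
    unfold gFun at hg
    obtain ⟨hFFeq, hAeq⟩ := aux_key θ k₂ c (Ac c) (ybarA (Ac c)) hθ0 hy0 hh hg
    exact ⟨hy0, hFFeq, hAeq⟩
  -- derivative of `FF`
  have hFFd : ∀ y : ℝ, HasDerivAt FF (k₂ / θ * Gd (θ * y)) y := by
    intro y
    have h := ((hasDerivAt_Gf (θ * y)).comp y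
      ((hasDerivAt_id y).const_mul θ)).const_mul (k₂ / θ ^ 2)
    refine h.congr_deriv ?_
    · field_simp
  -- strict monotonicity of `FF` on `[0, ∞)`
  have hmono : StrictMonoOn FF (Set.Ici 0) := by
    apply strictMonoOn_of_deriv_pos (convex_Ici 0)
    · exact fun y _ => ((hFFd y).differentiableAt.continuousAt).continuousWithinAt
    · intro y hy
      rw [interior_Ici, Set.mem_Ioi] at hy
      rw [(hFFd y).deriv]
      exact mul_pos (div_pos hk2 hθ0) (Gd_pos (mul_pos hθ0 hy))
  have hFFpos : ∀ y : ℝ, 0 < y → 0 < FF y := fun y hy =>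
    mul_pos (div_pos hk2 (by positivity)) (Gf_pos (mul_pos hθ0 hy))
  have hs_mono : ∀ c₁ c₂ : ℝ, 0 < c₁ → c₁ < c₂ → s c₁ < s c₂ := by
    intro c₁ c₂ h1 h2
    obtain ⟨hy1, hF1, -⟩ := key1 c₁ h1
    obtain ⟨hy2, hF2, -⟩ := key1 c₂ (h1.trans h2)
    by_contra hle
    push_neg at hle
    have := hmono.monotoneOn (Set.mem_Ici.2 hy2.le) (Set.mem_Ici.2 hy1.le) hle
    rw [hF1, hF2] at this
    linarith
  have hs_surj : ∀ y : ℝ, 0 < y → s (FF y) = y := by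
    intro y hy
    obtain ⟨hy', hF', -⟩ := key1 (FF y) (hFFpos y hy)
    exact hmono.injOn (Set.mem_Ici.2 hy'.le) (Set.mem_Ici.2 hy.le) hF'
  have hs_cont : ∀ c : ℝ, 0 < c → ContinuousAt s c := by
    intro c hc
    obtain ⟨hy, -, -⟩ := key1 c hc
    have hmono_s : StrictMonoOn s (Set.Ioi 0) := fun a ha b hb hab => hs_mono a b ha hab
    apply hmono_s.continuousAt_of_image_mem_nhds (isOpen_Ioi.mem_nhds hc)
    refine Filter.mem_of_superset (isOpen_Ioi.mem_nhds hy) ?_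
    intro z hz
    exact ⟨FF z, hFFpos z hz, hs_surj z hz⟩
  have hs_deriv : ∀ c : ℝ, 0 < c → HasDerivAt s (k₂ / θ * Gd (θ * s c))⁻¹ c := by
    intro c hc
    obtain ⟨hy, hF, -⟩ := key1 c hc
    apply HasDerivAt.of_local_left_inverse (hs_cont c hc) (hFFd (s c))
      (ne_of_gt (mul_pos (div_pos hk2 hθ0) (Gd_pos (mul_pos hθ0 hy))))
    filter_upwards [isOpen_Ioi.mem_nhds hc] with z hz
    exact (key1 z hz).2.1
  -- derivative of `Hf`
  have hHf : ∀ y : ℝ, 0 < y →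
      HasDerivAt (fun y => k₂ * y / (θ * Real.sinh (θ * y))) (k₂ / θ * Kf (θ * y)) y := by
    intro y hy
    have hty : 0 < θ * y := mul_pos hθ0 hy
    have hsinh : 0 < Real.sinh (θ * y) := by rwa [Real.sinh_pos_iff]
    have hnum : HasDerivAt (fun y : ℝ => k₂ * y) k₂ y := by
      simpa using (hasDerivAt_id y).const_mul k₂
    have hden : HasDerivAt (fun y : ℝ => θ * Real.sinh (θ * y))
        (θ * (Real.cosh (θ * y) * (θ * 1))) y :=
      (((Real.hasDerivAt_sinh (θ * y)).comp y ((hasDerivAt_id y).const_mul θ))).const_mul θ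
    have h := hnum.div hden (by positivity)
    refine h.congr_deriv ?_
    unfold Kf
    field_simp
  set D : ℝ → ℝ := fun c => k₂ / θ * Kf (θ * s c) * (k₂ / θ * Gd (θ * s c))⁻¹ with hD_def
  have hAc_deriv : ∀ c : ℝ, 0 < c → HasDerivAt Ac (D c) c := by
    intro c hc
    have hy := (key1 c hc).1
    have h1 : HasDerivAt (fun c => k₂ * s c / (θ * Real.sinh (θ * s c))) (D c) c :=
      (hHf (s c) hy).comp c (hs_deriv c hc)
    refine HasDerivAt.congr_of_eventuallyEq h1 ?_
    filter_upwards [isOpen_Ioi.mem_nhds hc] with z hz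
    exact (key1 z hz).2.2
  -- choice of `c₀` and the affine form of `V`
  obtain ⟨c₀, hc₀, e, hVeq⟩ : ∃ c₀ : ℝ, 0 < c₀ ∧ ∃ e : ℝ, ∀ c ∈ Set.Ioo (0:ℝ) c₀,
      VFun θ k₂ k₀ xv Ac s c x = 2 * Ac c + k₀ - e * c := by
    by_cases hx : x = xv
    · refine ⟨1, one_pos, 0, ?_⟩
      intro c hc
      have hy := (key1 c hc.1).1
      rw [VFun, if_pos ⟨by rw [hx]; linarith, by rw [hx]; linarith⟩]
      rw [hx]
      simp [phiFun]
      ring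
    · have hd : 0 < |x - xv| := abs_pos.2 (sub_ne_zero.2 hx)
      refine ⟨FF |x - xv|, hFFpos _ hd, 1, ?_⟩
      intro c hc
      have hy := (key1 c hc.1).1
      have hlt : s c < |x - xv| := by
        have := hs_mono c (FF |x - xv|) hc.1 hc.2
        rwa [hs_surj _ hd] at this
      rw [VFun, if_neg ?_]
      · simp [phiFun]
        ring
      · rintro ⟨h1, h2⟩
        have : |x - xv| < s c := abs_sub_lt_iff.2 ⟨by linarith, by linarith⟩
        linarith
  have hV_deriv : ∀ c ∈ Set.Ioo (0:ℝ) c₀,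
      HasDerivAt (fun c => VFun θ k₂ k₀ xv Ac s c x) (2 * D c - e) c := by
    intro c hc
    have h1 : HasDerivAt (fun c => 2 * Ac c + k₀ - e * c) (2 * D c - e) c := by
      have h := (((hAc_deriv c hc.1).const_mul 2).add_const k₀).sub
        ((hasDerivAt_id c).const_mul e)
      refine h.congr_deriv ?_
      simp
    refine HasDerivAt.congr_of_eventuallyEq h1 ?_
    filter_upwards [Ioo_mem_nhds hc.1 hc.2] with z hz
    exact hVeq z hz
  have hderiv_eq : ∀ c ∈ Set.Ioo (0:ℝ) c₀,
      deriv (fun c => VFun θ k₂ k₀ xv Ac s c x) c = 2 * D c - e :=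
    fun c hc => (hV_deriv c hc).deriv
  have hIoo : Set.Ioo (0:ℝ) c₀ ∈ nhdsWithin (0:ℝ) (Set.Ioi 0) :=
    Ioo_mem_nhdsGT_of_mem ⟨le_refl 0, hc₀⟩
  -- `θ * s c → 0⁺`
  have hts : Filter.Tendsto (fun c => θ * s c) (nhdsWithin (0:ℝ) (Set.Ioi 0))
      (nhdsWithin (0:ℝ) (Set.Ioi 0)) := by
    rw [tendsto_nhdsWithin_iff]
    constructor
    · rw [tendsto_order]
      constructor
      · intro a ha
        filter_upwards [self_mem_nhdsWithin] with c hc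
        have := (key1 c hc).1
        have : 0 < θ * s c := mul_pos hθ0 this
        linarith
      · intro b hb
        have hy : 0 < b / (2 * θ) := by positivity
        filter_upwards [Ioo_mem_nhdsGT_of_mem
          (Set.mem_Ico.2 ⟨le_refl (0:ℝ), hFFpos _ hy⟩)] with c hc
        have hlt : s c < b / (2 * θ) := by
          have := hs_mono c (FF (b / (2 * θ))) hc.1 hc.2
          rwa [hs_surj _ hy] at this
        calc θ * s c < θ * (b / (2 * θ)) := (mul_lt_mul_iff_right₀ hθ0).2 hlt
          _ = b / 2 := by field_simp
          _ < b := by linarith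
    · filter_upwards [self_mem_nhdsWithin] with c hc
      exact mul_pos hθ0 (key1 c hc).1
  have hPsi := aux_Psi_limit.comp hts
  have hsqrt0 : Filter.Tendsto (fun c : ℝ => Real.sqrt c * e) (nhdsWithin (0:ℝ) (Set.Ioi 0))
      (nhds 0) := by
    have h := (((Real.continuous_sqrt.tendsto 0).mono_left
      (nhdsWithin_le_nhds (s := Set.Ioi (0:ℝ)))).mul_const e)
    simpa using h
  have hmain : Filter.Tendsto (fun c => Real.sqrt k₂ / θ *
      (Real.sqrt (Gf (θ * s c)) * (2 * Kf (θ * s c) / Gd (θ * s c))) - Real.sqrt c * e)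
      (nhdsWithin (0:ℝ) (Set.Ioi 0))
      (nhds (Real.sqrt k₂ / θ * (-(Real.sqrt 3)⁻¹) - 0)) :=
    (hPsi.const_mul _).sub hsqrt0
  -- pointwise identification of `√c * deriv V`
  have hcongr : ∀ c ∈ Set.Ioo (0:ℝ) c₀,
      Real.sqrt k₂ / θ * (Real.sqrt (Gf (θ * s c)) * (2 * Kf (θ * s c) / Gd (θ * s c)))
        - Real.sqrt c * e = Real.sqrt c * (2 * D c - e) := by
    intro c hc
    obtain ⟨hy, hF, -⟩ := key1 c hc.1
    have ht : 0 < θ * s c := mul_pos hθ0 hy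
    have hGd : Gd (θ * s c) ≠ 0 := (Gd_pos ht).ne'
    have h1 : Real.sqrt c = Real.sqrt k₂ / θ * Real.sqrt (Gf (θ * s c)) := by
      conv_lhs => rw [← hF]
      show Real.sqrt (k₂ / θ ^ 2 * Gf (θ * s c)) = _
      rw [Real.sqrt_mul (by positivity), Real.sqrt_div hk2.le, Real.sqrt_sq hθ0.le]
    rw [h1, hD_def]
    have hkθ : k₂ / θ ≠ 0 := (div_pos hk2 hθ0).ne'
    field_simp
  -- value identity
  have hval : Real.sqrt k₂ / θ * (-(Real.sqrt 3)⁻¹) - 0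
      = -(σ * Real.sqrt α) / (Real.sqrt 6 * ρ) := by
    rw [hθ, hk₂]
    rw [Real.sqrt_div hαpos.le ρ]
    rw [show (6:ℝ) = 2 * 3 by norm_num, Real.sqrt_mul (by norm_num : (0:ℝ) ≤ 2) 3,
        Real.sqrt_mul (by norm_num : (0:ℝ) ≤ 2) ρ]
    have h2 : Real.sqrt 2 ≠ 0 := by positivity
    have h3 : Real.sqrt 3 ≠ 0 := by positivity
    have hρs : Real.sqrt ρ ≠ 0 := by positivity
    have hρq : Real.sqrt ρ * Real.sqrt ρ = ρ := Real.mul_self_sqrt hρ.le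
    field_simp
    linear_combination (Real.sqrt α * σ) * hρq
  have T1 : Filter.Tendsto (fun c => Real.sqrt c *
      deriv (fun c => VFun θ k₂ k₀ xv Ac s c x) c)
      (nhdsWithin (0:ℝ) (Set.Ioi 0)) (nhds (-(σ * Real.sqrt α) / (Real.sqrt 6 * ρ))) := by
    rw [← hval]
    refine hmain.congr' ?_
    filter_upwards [hIoo] with c hc
    rw [hderiv_eq c hc, ← hcongr c hc]
  refine ⟨c₀, hc₀, fun c hc => (hV_deriv c hc).differentiableAt, T1, ?_⟩
  -- `deriv V → -∞`
  have hneg : -(σ * Real.sqrt α) / (Real.sqrt 6 * ρ) < 0 := by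
    apply div_neg_of_neg_of_pos
    · have : 0 < σ * Real.sqrt α := mul_pos hσ (Real.sqrt_pos.2 hαpos)
      linarith
    · have h6 : (0:ℝ) < Real.sqrt 6 := Real.sqrt_pos.2 (by norm_num)
      exact mul_pos h6 hρ
  have hinv : Filter.Tendsto (fun c : ℝ => (Real.sqrt c)⁻¹)
      (nhdsWithin (0:ℝ) (Set.Ioi 0)) Filter.atTop := by
    apply Filter.Tendsto.comp tendsto_inv_nhdsGT_zero
    rw [tendsto_nhdsWithin_iff]
    constructor
    · have h := (Real.continuous_sqrt.tendsto 0).mono_left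
        (nhdsWithin_le_nhds (s := Set.Ioi (0:ℝ)))
      simpa using h
    · filter_upwards [self_mem_nhdsWithin] with c hc
      exact Real.sqrt_pos.2 hc
  have T2 := Filter.Tendsto.neg_mul_atTop hneg T1 hinv
  refine T2.congr' ?_
  filter_upwards [self_mem_nhdsWithin] with c hc
  have hsc : Real.sqrt c ≠ 0 := (Real.sqrt_pos.2 hc).ne'
  rw [mul_comm (Real.sqrt c) _, mul_assoc, mul_inv_cancel₀ hsc, mul_one]
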